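/- arXiv:1602.02271 — 2 statements merged into one kernel-verified Lean document; each statement's English description precedes it below -/
import Mathlib

section
/- Let 𝕜 be a complete nontrivially normed field and let L be a finite-dimensional normed 𝕜-vector space equipped with a 𝕜-bilinear Lie bracket ⁅·,·⁆ making L a Lie algebra over 𝕜. For a continuous 𝕜-linear functional λ : L → 𝕜, let 𝔰(λ) := {x ∈ L : λ(⁅x, y⁆) = 0 for all y ∈ L}, a 𝕜-linear subspace of L. Then for every natural number n, the set {λ : finrank 𝕜 (𝔰(λ)) < n} is open in the continuous dual of L equipped with the operator norm topology. -/
open Module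

/-- The stabilizer (centralizer) of a continuous linear functional `l` on a Lie algebra
`(L, bracket)` under the coadjoint action:
`𝔰(l) = {x ∈ L : l ⁅x, y⁆ = 0 for all y ∈ L}`. -/
def coadjointStabilizer {𝕜 : Type*} [NontriviallyNormedField 𝕜]
    {L : Type*} [NormedAddCommGroup L] [NormedSpace 𝕜 L]
    (bracket : L →ₗ[𝕜] L →ₗ[𝕜] L) (l : L →L[𝕜] 𝕜) : Submodule 𝕜 L where
  carrier := {x : L | ∀ y : L, l (bracket x y) = 0}
  add_mem' := by
    intro a b ha hb y
    rw [map_add, LinearMap.add_apply, map_add, ha y, hb y, add_zero]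
  zero_mem' := by
    intro y
    rw [map_zero, LinearMap.zero_apply, map_zero]
  smul_mem' := by
    intro c a ha y
    rw [map_smul, LinearMap.smul_apply, map_smul, ha y, smul_zero]

/-- Let `𝕜` be a complete nontrivially normed field and `L` a
finite-dimensional normed `𝕜`-vector space equipped with a `𝕜`-bilinear Lie bracket
(antisymmetric and satisfying the Jacobi identity) making `L` a Lie algebra over `𝕜`.
For a continuous linear functional `λ : L → 𝕜`, let
`𝔰(λ) := {x ∈ L : λ ⁅x, y⁆ = 0 for all y ∈ L}`, a `𝕜`-subspace of `L`. Then for every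
`n : ℕ`, the set `{λ : finrank 𝕜 𝔰(λ) < n}` is open in the continuous dual `L →L[𝕜] 𝕜`
equipped with the operator norm topology. -/
theorem stmt5 {𝕜 : Type*} [NontriviallyNormedField 𝕜] [CompleteSpace 𝕜]
    {L : Type*} [NormedAddCommGroup L] [NormedSpace 𝕜 L] [FiniteDimensional 𝕜 L]
    (bracket : L →ₗ[𝕜] L →ₗ[𝕜] L)
    (hanti : ∀ x : L, bracket x x = 0)
    (hjacobi : ∀ x y z : L,
      bracket x (bracket y z) + bracket y (bracket z x) + bracket z (bracket x y) = 0)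
    (n : ℕ) :
    IsOpen {l : L →L[𝕜] 𝕜 | finrank 𝕜 (coadjointStabilizer bracket l) < n} := by
  classical
  -- The map `Φ l : L →L[𝕜] (L →L[𝕜] 𝕜)`, `x ↦ (y ↦ l (bracket x y))`.
  let Φ : (L →L[𝕜] 𝕜) → (L →L[𝕜] (L →L[𝕜] 𝕜)) := fun l =>
    LinearMap.toContinuousLinearMap
      { toFun := fun x => l.comp (LinearMap.toContinuousLinearMap (bracket x))
        map_add' := by
          intro a b
          ext y
          simp [map_add]
        map_smul' := by
          intro c a
          ext y
          simp [map_smul] }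
  have hΦlin : IsLinearMap 𝕜 Φ := by
    constructor
    · intro l₁ l₂
      ext x y
      simp [Φ]
    · intro c l
      ext x y
      simp [Φ]
  have hΦcont : Continuous Φ := by
    have h := LinearMap.continuous_of_finiteDimensional (hΦlin.mk' Φ)
    exact h
  have hker : ∀ l : L →L[𝕜] 𝕜,
      coadjointStabilizer bracket l = LinearMap.ker ((Φ l : L →L[𝕜] (L →L[𝕜] 𝕜)) : L →ₗ[𝕜] (L →L[𝕜] 𝕜)) := by
    intro l
    ext x
    simp only [LinearMap.mem_ker, ContinuousLinearMap.coe_coe]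
    constructor
    · intro hx
      ext y
      simpa [Φ] using hx y
    · intro hx y
      have := congrArg (fun f : L →L[𝕜] 𝕜 => f y) hx
      simpa [Φ] using this
  have key : ∀ l : L →L[𝕜] 𝕜,
      finrank 𝕜 (coadjointStabilizer bracket l) < n ↔
        (↑(finrank 𝕜 L + 1 - n) : Cardinal) ≤ ((Φ l : L →L[𝕜] (L →L[𝕜] 𝕜)) : L →ₗ[𝕜] (L →L[𝕜] 𝕜)).rank := by
    intro l
    rw [hker l]
    set f := ((Φ l : L →L[𝕜] (L →L[𝕜] 𝕜)) : L →ₗ[𝕜] (L →L[𝕜] 𝕜))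
    have hrank : f.rank = (finrank 𝕜 (LinearMap.range f) : Cardinal) := by
      rw [LinearMap.rank, ← finrank_eq_rank]
    rw [hrank, Nat.cast_le]
    have hrn : finrank 𝕜 (LinearMap.range f) + finrank 𝕜 (LinearMap.ker f) = finrank 𝕜 L :=
      LinearMap.finrank_range_add_finrank_ker f
    omega
  have : {l : L →L[𝕜] 𝕜 | finrank 𝕜 (coadjointStabilizer bracket l) < n} =
      Φ ⁻¹' {f : L →L[𝕜] (L →L[𝕜] 𝕜) |
        (↑(finrank 𝕜 L + 1 - n) : Cardinal) ≤ (f : L →ₗ[𝕜] (L →L[𝕜] 𝕜)).rank} := by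
    ext l
    exact key l
  rw [this]
  exact (isOpen_setOf_nat_le_rank _).preimage hΦcont
end

section
/- Let A be a semisimple ring and let M and N be left A-modules with M ≠ 0. Assume that there is no simple A-module S admitting both an injective A-linear map S → M and an injective A-linear map S → N. Then there exists an idempotent element e ∈ A (e * e = e) such that e • m ≠ 0 for some m ∈ M, while e • x = 0 for every x ∈ N. -/
universe u

/-- Let `A` be a semisimple ring and let `M`, `N` be left `A`-modules
with `M ≠ 0`. Assume there is no simple `A`-module `S` admitting both an injective
`A`-linear map `S → M` and an injective `A`-linear map `S → N`. Then there exists an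
idempotent `e ∈ A` with `e • m ≠ 0` for some `m ∈ M`, while `e • x = 0` for all `x ∈ N`. -/
theorem stmt6 {A : Type u} [Ring A] [IsSemisimpleRing A]
    {M N : Type u} [AddCommGroup M] [Module A M] [AddCommGroup N] [Module A N]
    [Nontrivial M]
    (h : ∀ (S : Type u) [AddCommGroup S] [Module A S], IsSimpleModule A S →
      ¬ ((∃ f : S →ₗ[A] M, Function.Injective f) ∧
         (∃ g : S →ₗ[A] N, Function.Injective g))) :
    ∃ e : A, e * e = e ∧ (∃ m : M, e • m ≠ 0) ∧ ∀ x : N, e • x = 0 := by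
  -- pick a simple submodule `S` of `M` and a nonzero element `s ∈ S`
  obtain ⟨S, hSsimple⟩ := IsSemisimpleModule.exists_simple_submodule A M
  have hSne : S ≠ ⊥ := (isSimpleModule_iff_isAtom.1 hSsimple).1
  obtain ⟨s, hsS, hs0⟩ := Submodule.exists_mem_ne_zero_of_ne_bot hSne
  -- the cyclic map `A → M`, `a ↦ a • s`
  set f : A →ₗ[A] M := LinearMap.toSpanSingleton A M s with hf
  set K : Submodule A A := LinearMap.ker f with hK
  -- `A ⧸ K ≅ span {s} = S` is simple
  have hspan : Submodule.span A {s} = S := by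
    have hle : Submodule.span A {s} ≤ S := Submodule.span_le.2 (by simpa using hsS)
    have hatom : IsAtom S := isSimpleModule_iff_isAtom.1 hSsimple
    rcases lt_or_eq_of_le hle with hlt | heq
    · exact absurd (hatom.2 _ hlt) fun hb => hs0 (by
        have : s ∈ Submodule.span A {s} := Submodule.mem_span_singleton_self s
        rw [hb] at this
        simpa using this)
    · exact heq
  have hrange : LinearMap.range f = S := by
    rw [← hspan, LinearMap.span_singleton_eq_range]
  have hquot : IsSimpleModule A (A ⧸ K) := by
    have : IsSimpleModule A (LinearMap.range f) := hrange ▸ hSsimple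
    exact IsSimpleModule.congr f.quotKerEquivRange
  -- complement `L` of `K` in `A`
  obtain ⟨L, hcompl⟩ := exists_isCompl K
  have hLsimple : IsSimpleModule A L :=
    IsSimpleModule.congr (K.quotientEquivOfIsCompl L hcompl).symm
  -- decompose `1 = k + e`
  have h1 : (1 : A) ∈ K ⊔ L := by rw [hcompl.sup_eq_top]; trivial
  obtain ⟨k, hk, e, he, hke⟩ := Submodule.mem_sup.1 h1
  -- `e` is idempotent
  have hek : e * k = 0 := by
    have hmemK : e * k ∈ K := K.smul_mem e hk
    have hmemL : e * k ∈ L := by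
      have heq : e * k + e * e = e := by
        calc e * k + e * e = e * (k + e) := (mul_add e k e).symm
        _ = e := by rw [hke, mul_one]
      rw [eq_sub_of_add_eq heq]
      exact sub_mem he (L.smul_mem e he)
    have : e * k ∈ K ⊓ L := ⟨hmemK, hmemL⟩
    rwa [hcompl.inf_eq_bot, Submodule.mem_bot] at this
  have hidem : e * e = e := by
    have heq : e * k + e * e = e := by
      calc e * k + e * e = e * (k + e) := (mul_add e k e).symm
      _ = e := by rw [hke, mul_one]
    rw [hek, zero_add] at heq
    exact heq
  -- `e • s ≠ 0`
  have hes : e • s ≠ 0 := by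
    intro h0
    have heK : e ∈ K := by
      rw [hK, LinearMap.mem_ker]
      simpa [hf, LinearMap.toSpanSingleton_apply] using h0
    have h1K : (1 : A) ∈ K := by rw [← hke]; exact K.add_mem hk heK
    have : s = 0 := by
      have := h1K
      rw [hK, LinearMap.mem_ker] at this
      simpa [hf, LinearMap.toSpanSingleton_apply] using this
    exact hs0 this
  -- the embedding `L → M`, `l ↦ (l : A) • s`, is injective
  have hinjM : Function.Injective ((f.comp L.subtype)) := by
    rw [← LinearMap.ker_eq_bot, LinearMap.ker_comp, Submodule.eq_bot_iff]
    rintro ⟨l, hl⟩ hl'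
    rw [Submodule.mem_comap] at hl'
    have hmem : l ∈ K ⊓ L := ⟨hl', hl⟩
    rw [hcompl.inf_eq_bot, Submodule.mem_bot] at hmem
    exact Subtype.ext hmem
  refine ⟨e, hidem, ⟨s, hes⟩, fun x => ?_⟩
  -- the map `L → N`, `l ↦ (l : A) • x`, must be zero
  set g : L →ₗ[A] N := (LinearMap.toSpanSingleton A N x).comp L.subtype with hg
  have hgzero : g = 0 := by
    by_contra hgne
    have hker : LinearMap.ker g = ⊥ ∨ LinearMap.ker g = ⊤ :=
      hLsimple.1.2 _
    rcases hker with hker | hker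
    · exact h L hLsimple ⟨⟨f.comp L.subtype, hinjM⟩,
        ⟨g, LinearMap.ker_eq_bot.1 hker⟩⟩
    · exact hgne (LinearMap.ker_eq_top.1 hker)
  have : g ⟨e, he⟩ = 0 := by rw [hgzero]; rfl
  simpa [hg, LinearMap.toSpanSingleton_apply] using this
end
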